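/- Let G = (V,E) be a finite simple graph with V a disjoint union V₂ ⊔ V₃ of unions of connected components, where every maximal clique in V₂ has size 2 and every chordless odd cycle in V₂ of length ≥ 5 has length 5, and every maximal clique in V₃ has size 3 with no chordless odd cycle of length ≥ 5 inside V₃. Let μ ∈ U⁽⁰⁾(G) with μ(−∞) ≥ 1, and suppose μ restricted to V₃⁻ decomposes as μ₁ + μ₂ with μ₁, μ₂ ∈ U⁽⁰⁾(G₃) and μ₁(−∞) = 1 (G₃ the induced subgraph on V₃). Define η(x) = μ(x)+1 for x ∈ V₂, η(x) = μ₂(x)+1 for x ∈ V₃, η(−∞) = μ(−∞)+3; and ζ(x) = −1 for x ∈ V₂, ζ(x) = μ₁(x)−1 for x ∈ V₃, ζ(−∞) = −3. Then η ∈ U⁽¹⁾(G), ζ ∈ U⁽⁻¹⁾(G), and η + ζ = μ. -/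

import Mathlib

variable {V : Type*} [DecidableEq V]

/-- A maximal clique of a graph. -/
def IsMaxClique (G : SimpleGraph V) (K : Finset V) : Prop :=
  G.IsClique ↑K ∧ ∀ K' : Finset V, G.IsClique ↑K' → K ⊆ K' → K = K'

/-- A chordless odd cycle of length `k ≥ 5`, given by its cyclically indexed
vertices `v 0, …, v (k-1)`. -/
def IsChordlessOddCycle (G : SimpleGraph V) (k : ℕ) (v : ℕ → V) : Prop :=
  Odd k ∧ 5 ≤ k ∧ (∀ i < k, ∀ j < k, v i = v j → i = j) ∧
    (∀ i < k, G.Adj (v i) (v ((i + 1) % k))) ∧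
    (∀ i < k, ∀ j < k, G.Adj (v i) (v j) → (i + 1) % k = j ∨ (j + 1) % k = i)

/-- The set `U⁽ⁿ⁾(G)` of integer vectors `μ` on `V ∪ {-∞}` (with `none = -∞`):
`μ(z) ≥ n` for all `z ∈ V`, `μ⁺(K) ≤ μ(-∞) - n` for every maximal clique `K`, and
`μ⁺(C) ≤ μ(-∞)(#C-1)/2 - n` for every chordless odd cycle `C` of length at least 5
(the cycle inequality is stated multiplied by 2). -/
def USet (G : SimpleGraph V) (n : ℤ) : Set (Option V → ℤ) :=
  {μ | (∀ z : V, n ≤ μ (some z)) ∧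
    (∀ K : Finset V, IsMaxClique G K → ∑ x ∈ K, μ (some x) ≤ μ none - n) ∧
    (∀ (k : ℕ) (v : ℕ → V), IsChordlessOddCycle G k v →
      2 * ∑ x ∈ (Finset.range k).image v, μ (some x) ≤ μ none * ((k : ℤ) - 1) - 2 * n)}

/-- Construction of a decomposition `μ = η + ζ`, `η ∈ U⁽¹⁾`, `ζ ∈ U⁽⁻¹⁾` in the case
where the clique numbers of the components are 2 (on `V₂`) and 3 (on `V₃`). -/
theorem stmt19 (G : SimpleGraph V) (V₂ V₃ : Set V)
    (hdisj : Disjoint V₂ V₃) (hunion : V₂ ∪ V₃ = Set.univ)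
    (hcomp : ∀ x y : V, G.Adj x y → (x ∈ V₂ ↔ y ∈ V₂))
    (hK2 : ∀ K : Finset V, IsMaxClique G K → ↑K ⊆ V₂ → K.card = 2)
    (hK3 : ∀ K : Finset V, IsMaxClique G K → ↑K ⊆ V₃ → K.card = 3)
    (hC5 : ∀ (k : ℕ) (v : ℕ → V), IsChordlessOddCycle G k v →
      (∀ i < k, v i ∈ V₂) → k = 5)
    (hC3 : ∀ (k : ℕ) (v : ℕ → V), IsChordlessOddCycle G k v →
      ¬ (∀ i < k, v i ∈ V₃))
    (μ : Option V → ℤ) (hμ : μ ∈ USet G 0) (hμinf : 1 ≤ μ none)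
    (μ₁ μ₂ : Option ↥V₃ → ℤ)
    (hμ₁ : μ₁ ∈ USet (G.induce V₃) 0) (hμ₂ : μ₂ ∈ USet (G.induce V₃) 0)
    (hdec : ∀ x : ↥V₃, μ₁ (some x) + μ₂ (some x) = μ (some ↑x))
    (hdecinf : μ₁ none + μ₂ none = μ none) (hμ₁inf : μ₁ none = 1)
    (η ζ : Option V → ℤ)
    (hη₂ : ∀ x ∈ V₂, η (some x) = μ (some x) + 1)
    (hη₃ : ∀ x : ↥V₃, η (some ↑x) = μ₂ (some x) + 1)
    (hηinf : η none = μ none + 3)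
    (hζ₂ : ∀ x ∈ V₂, ζ (some x) = -1)
    (hζ₃ : ∀ x : ↥V₃, ζ (some ↑x) = μ₁ (some x) - 1)
    (hζinf : ζ none = -3) :
    η ∈ USet G 1 ∧ ζ ∈ USet G (-1) ∧ η + ζ = μ := by
  classical
  -- basic membership facts
  have hmem : ∀ z : V, z ∈ V₂ ∨ z ∈ V₃ := by
    intro z
    have : z ∈ V₂ ∪ V₃ := hunion.symm ▸ Set.mem_univ z
    exact this
  have hV3iff : ∀ z : V, z ∈ V₃ ↔ z ∉ V₂ := by
    intro z
    constructor
    · intro h3 h2; exact (Set.disjoint_left.mp hdisj) h2 h3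
    · intro h; exact (hmem z).resolve_left h
  -- every maximal clique lies in V₂ (card 2) or V₃ (card 3)
  have hcliqueside : ∀ K : Finset V, IsMaxClique G K →
      (↑K ⊆ V₂ ∧ K.card = 2) ∨ (↑K ⊆ V₃ ∧ K.card = 3) := by
    intro K hK
    rcases Finset.eq_empty_or_nonempty K with rfl | ⟨a, ha⟩
    · exact absurd (hK2 ∅ hK (by simp)) (by simp)
    have hadjside : ∀ b ∈ K, b = a ∨ G.Adj b a := by
      intro b hb
      rcases eq_or_ne b a with rfl | hne
      · exact Or.inl rfl
      · exact Or.inr (hK.1 (Finset.mem_coe.mpr hb) (Finset.mem_coe.mpr ha) hne)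
    rcases hmem a with h2 | h3
    · left
      have hsub : ↑K ⊆ V₂ := by
        intro b hb
        rcases hadjside b (Finset.mem_coe.mp hb) with rfl | hadj
        · exact h2
        · exact (hcomp b a hadj).mpr h2
      exact ⟨hsub, hK2 K hK hsub⟩
    · right
      have hsub : ↑K ⊆ V₃ := by
        intro b hb
        rcases hadjside b (Finset.mem_coe.mp hb) with rfl | hadj
        · exact h3
        · rw [hV3iff]
          intro hb2
          exact (hV3iff a).mp h3 ((hcomp b a hadj).mp hb2)
      exact ⟨hsub, hK3 K hK hsub⟩
  -- every chordless odd cycle lies in V₂ (so has length 5)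
  have hcycleside : ∀ (k : ℕ) (v : ℕ → V), IsChordlessOddCycle G k v →
      (∀ i < k, v i ∈ V₂) ∧ k = 5 := by
    intro k v hc
    obtain ⟨hodd, hk5, hinj, hadj, _⟩ := hc
    have hstep : ∀ i, i + 1 < k → (v i ∈ V₂ ↔ v (i + 1) ∈ V₂) := by
      intro i h
      have := hadj i (by omega)
      rw [Nat.mod_eq_of_lt h] at this
      exact hcomp _ _ this
    have hall : ∀ i, i < k → (v i ∈ V₂ ↔ v 0 ∈ V₂) := by
      intro i
      induction i with
      | zero => intro _; rfl
      | succ n ih => intro h; rw [← hstep n h]; exact ih (by omega)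
    have hin2 : ∀ i < k, v i ∈ V₂ := by
      rcases hmem (v 0) with h2 | h3
      · intro i hi; exact (hall i hi).mpr h2
      · exfalso
        apply hC3 k v ⟨hodd, hk5, hinj, hadj, by assumption⟩
        intro i hi
        rw [hV3iff]
        intro h2
        exact (hV3iff (v 0)).mp h3 ((hall i hi).mp h2)
    exact ⟨hin2, hC5 k v ⟨hodd, hk5, hinj, hadj, by assumption⟩ hin2⟩
  have hμ₂inf : μ₂ none = μ none - 1 := by omega
  -- lift of a maximal clique contained in V₃
  have hlift : ∀ K : Finset V, IsMaxClique G K → (hsub : ↑K ⊆ V₃) →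
      ∀ ν : Option ↥V₃ → ℤ, ν ∈ USet (G.induce V₃) 0 →
      ∑ x ∈ K.attach, ν (some ⟨x.1, hsub (Finset.mem_coe.mpr x.2)⟩) ≤ ν none := by
    intro K hK hsub ν hν
    set e : {x // x ∈ K} ↪ ↥V₃ :=
      ⟨fun x => ⟨x.1, hsub (Finset.mem_coe.mpr x.2)⟩,
       fun a b h => Subtype.ext (Subtype.mk_eq_mk.mp h)⟩ with he
    set K' : Finset ↥V₃ := K.attach.map e with hK'
    have hmemK' : ∀ y : ↥V₃, y ∈ K' ↔ (y : V) ∈ K := by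
      intro y
      simp [hK', he, Finset.mem_map, Subtype.ext_iff]
      exact ⟨fun ⟨a, b, h⟩ => (show a = (y : V) from h) ▸ b, fun h => ⟨_, h, rfl⟩⟩
    have hmax' : IsMaxClique (G.induce V₃) K' := by
      constructor
      · intro a ha b hb hne
        have haK : (a : V) ∈ K := (hmemK' a).mp (Finset.mem_coe.mp ha)
        have hbK : (b : V) ∈ K := (hmemK' b).mp (Finset.mem_coe.mp hb)
        have hne' : (a : V) ≠ (b : V) := fun h => hne (Subtype.ext h)
        exact hK.1 (Finset.mem_coe.mpr haK) (Finset.mem_coe.mpr hbK) hne'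
      · intro K'' hcl hsub'
        set K3 : Finset V := K''.image (fun y : ↥V₃ => (y : V)) with hK3d
        have hKsub : K ⊆ K3 := by
          intro x hx
          exact Finset.mem_image.mpr ⟨⟨x, hsub (Finset.mem_coe.mpr hx)⟩,
            hsub' ((hmemK' _).mpr hx), rfl⟩
        have hcl3 : G.IsClique ↑K3 := by
          intro a ha b hb hne
          obtain ⟨ya, hya, rfl⟩ := Finset.mem_image.mp (Finset.mem_coe.mp ha)
          obtain ⟨yb, hyb, rfl⟩ := Finset.mem_image.mp (Finset.mem_coe.mp hb)
          have : ya ≠ yb := fun h => hne (congrArg _ h)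
          exact hcl (Finset.mem_coe.mpr hya) (Finset.mem_coe.mpr hyb) this
        have hKeq : K = K3 := hK.2 K3 hcl3 hKsub
        apply Finset.Subset.antisymm hsub'
        intro y hy
        exact (hmemK' y).mpr (hKeq ▸ Finset.mem_image_of_mem _ hy)
    have := hν.2.1 K' hmax'
    calc ∑ x ∈ K.attach, ν (some ⟨x.1, hsub (Finset.mem_coe.mpr x.2)⟩)
        = ∑ y ∈ K', ν (some y) := by rw [hK', Finset.sum_map]; rfl
      _ ≤ ν none - 0 := this
      _ = ν none := by ring
  refine ⟨⟨?_, ?_, ?_⟩, ⟨?_, ?_, ?_⟩, ?_⟩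
  -- η vertex condition
  · intro z
    rcases hmem z with h2 | h3
    · have := hμ.1 z; rw [hη₂ z h2]; omega
    · have := hμ₂.1 ⟨z, h3⟩; rw [hη₃ ⟨z, h3⟩]; omega
  -- η clique condition
  · intro K hK
    rcases hcliqueside K hK with ⟨hsub, hcard⟩ | ⟨hsub, hcard⟩
    · have h1 : ∑ x ∈ K, η (some x) = (∑ x ∈ K, μ (some x)) + 2 := by
        rw [Finset.sum_congr rfl (fun x hx => hη₂ x (hsub (Finset.mem_coe.mpr hx))),
          Finset.sum_add_distrib, Finset.sum_const, hcard]
        push_cast; ring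
      have h2 := hμ.2.1 K hK
      rw [h1, hηinf]; omega
    · have h1 : ∑ x ∈ K, η (some x) =
          (∑ x ∈ K.attach, μ₂ (some ⟨x.1, hsub (Finset.mem_coe.mpr x.2)⟩)) + 3 := by
        rw [← Finset.sum_attach K (fun x => η (some x)),
          Finset.sum_congr rfl
            (fun x _ => hη₃ ⟨x.1, hsub (Finset.mem_coe.mpr x.2)⟩),
          Finset.sum_add_distrib, Finset.sum_const, Finset.card_attach, hcard]
        push_cast; ring
      have h2 := hlift K hK hsub μ₂ hμ₂
      rw [h1, hηinf]; omega
  -- η cycle condition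
  · intro k v hc
    obtain ⟨hin2, hk5⟩ := hcycleside k v hc
    have hcard : ((Finset.range k).image v).card = k := by
      rw [Finset.card_image_of_injOn, Finset.card_range]
      intro i hi j hj hij
      exact hc.2.2.1 i (Finset.mem_range.mp hi) j (Finset.mem_range.mp hj) hij
    have h1 : ∑ x ∈ (Finset.range k).image v, η (some x) =
        (∑ x ∈ (Finset.range k).image v, μ (some x)) + k := by
      rw [Finset.sum_congr rfl (fun x hx => hη₂ x (by
          obtain ⟨i, hi, rfl⟩ := Finset.mem_image.mp hx
          exact hin2 i (Finset.mem_range.mp hi))),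
        Finset.sum_add_distrib, Finset.sum_const, hcard]
      push_cast; ring
    have h2 := hμ.2.2 k v hc
    subst hk5
    rw [h1, hηinf]
    push_cast at h2 ⊢
    linarith
  -- ζ vertex condition
  · intro z
    rcases hmem z with h2 | h3
    · rw [hζ₂ z h2]
    · have := hμ₁.1 ⟨z, h3⟩; rw [hζ₃ ⟨z, h3⟩]; omega
  -- ζ clique condition
  · intro K hK
    rcases hcliqueside K hK with ⟨hsub, hcard⟩ | ⟨hsub, hcard⟩
    · have h1 : ∑ x ∈ K, ζ (some x) = -2 := by
        rw [Finset.sum_congr rfl (fun x hx => hζ₂ x (hsub (Finset.mem_coe.mpr hx))),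
          Finset.sum_const, hcard]
        push_cast; ring
      rw [h1, hζinf]; omega
    · have h1 : ∑ x ∈ K, ζ (some x) =
          (∑ x ∈ K.attach, μ₁ (some ⟨x.1, hsub (Finset.mem_coe.mpr x.2)⟩)) - 3 := by
        rw [← Finset.sum_attach K (fun x => ζ (some x)),
          Finset.sum_congr rfl
            (fun x _ => hζ₃ ⟨x.1, hsub (Finset.mem_coe.mpr x.2)⟩),
          Finset.sum_sub_distrib, Finset.sum_const, Finset.card_attach, hcard]
        push_cast; ring
      have h2 := hlift K hK hsub μ₁ hμ₁
      rw [h1, hζinf]; omega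
  -- ζ cycle condition
  · intro k v hc
    obtain ⟨hin2, hk5⟩ := hcycleside k v hc
    have hcard : ((Finset.range k).image v).card = k := by
      rw [Finset.card_image_of_injOn, Finset.card_range]
      intro i hi j hj hij
      exact hc.2.2.1 i (Finset.mem_range.mp hi) j (Finset.mem_range.mp hj) hij
    have h1 : ∑ x ∈ (Finset.range k).image v, ζ (some x) = -(k : ℤ) := by
      rw [Finset.sum_congr rfl (fun x hx => hζ₂ x (by
          obtain ⟨i, hi, rfl⟩ := Finset.mem_image.mp hx
          exact hin2 i (Finset.mem_range.mp hi))),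
        Finset.sum_const, hcard]
      push_cast; ring
    subst hk5
    rw [h1, hζinf]
    norm_num
  -- decomposition
  · funext x
    cases x with
    | none => simp only [Pi.add_apply, hηinf, hζinf]; ring
    | some z =>
      rcases hmem z with h2 | h3
      · simp only [Pi.add_apply, hη₂ z h2, hζ₂ z h2]; ring
      · have hd : μ₁ (some ⟨z, h3⟩) + μ₂ (some ⟨z, h3⟩) = μ (some z) := hdec ⟨z, h3⟩
        simp only [Pi.add_apply, hη₃ ⟨z, h3⟩, hζ₃ ⟨z, h3⟩]
        omega
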